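/- Let k be a commutative ring, m ≥ 1, and T(M) = (M^{⊗m})_{C_m} as above with the rotation isomorphisms τ. Then for every pair (M, N) of k-modules, τ_{M,N} ∘ τ_{N,M} = id on T(N ⊗ M). -/

import Mathlib

open scoped TensorProduct

variable (k : Type*) [CommRing k]

/-- The submodule of the `m`-fold tensor power generated by `y - σy`, where `σ` is the cyclic
permutation of tensor factors; the quotient by it is the `C_m`-coinvariants. -/
noncomputable def coinvSub (A : Type*) [AddCommGroup A] [Module k A] (m : ℕ) :
    Submodule k (⨂[k] _i : Fin m, A) :=
  Submodule.span k
    {x | ∃ y, x = y - (PiTensorProduct.reindex k (fun _ : Fin m => A) (finRotate m)) y}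

/-- `T(A) = (A^{⊗m})_{C_m}`, the coinvariants of the cyclic action on the tensor power. -/
noncomputable abbrev Tcoinv (A : Type*) [AddCommGroup A] [Module k A] (m : ℕ) :=
  (⨂[k] _i : Fin m, A) ⧸ coinvSub k A m

section Aux

open PiTensorProduct

variable (A B : Type*) [AddCommGroup A] [Module k A] [AddCommGroup B] [Module k B]


noncomputable def succEquiv (mm : ℕ) :
    (⨂[k] _ : Fin (mm + 1), A) ≃ₗ[k] A ⊗[k] (⨂[k] _ : Fin mm, A) :=
  (reindex k (fun _ : Fin (mm + 1) => A)
      ((finCongr (Nat.add_comm mm 1)).trans finSumFinEquiv.symm)).trans <|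
    ((tmulEquiv (ι := Fin 1) (ι₂ := Fin mm) k A).symm.trans
      (TensorProduct.congr (subsingletonEquiv (0 : Fin 1)) (LinearEquiv.refl k _)))

theorem succEquiv_tprod (mm : ℕ) (x : Fin (mm + 1) → A) :
    succEquiv k A mm (PiTensorProduct.tprod k x)
      = x 0 ⊗ₜ[k] PiTensorProduct.tprod k (fun i => x i.succ) := by
  simp only [succEquiv, LinearEquiv.trans_apply, reindex_tprod, tmulEquiv_symm_apply,
    TensorProduct.congr_tmul, subsingletonEquiv_apply_tprod, LinearEquiv.refl_apply]
  have h1 : ∀ j : Fin 1 ⊕ Fin mm,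
      ((finCongr (Nat.add_comm mm 1)).trans finSumFinEquiv.symm).symm j
        = Sum.elim (fun _ => (0 : Fin (mm+1))) Fin.succ j := by
    rintro (j | j)
    · ext
      simp [finSumFinEquiv, Fin.fin_one_eq_zero j]
    · ext
      simp [finSumFinEquiv, Nat.add_comm]
  simp only [h1, Sum.elim_inl, Sum.elim_inr]


/-- Split a tensor power of a binary tensor product into two tensor powers. -/
noncomputable def splitMap : ∀ mm : ℕ,
    (⨂[k] _ : Fin mm, (A ⊗[k] B)) →ₗ[k] (⨂[k] _ : Fin mm, A) ⊗[k] (⨂[k] _ : Fin mm, B)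
  | 0 =>
    (TensorProduct.map (isEmptyEquiv (Fin 0)).symm.toLinearMap
        (isEmptyEquiv (Fin 0)).symm.toLinearMap).comp
      (((TensorProduct.lid k k).symm.toLinearMap).comp (isEmptyEquiv (Fin 0)).toLinearMap)
  | (mm + 1) =>
    (TensorProduct.map (succEquiv k A mm).symm.toLinearMap
        (succEquiv k B mm).symm.toLinearMap).comp <|
      ((TensorProduct.tensorTensorTensorComm k A B _ _).toLinearMap).comp <|
        (LinearMap.lTensor (A ⊗[k] B) (splitMap mm)).comp
          (succEquiv k (A ⊗[k] B) mm).toLinearMap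

theorem splitMap_tprod : ∀ (mm : ℕ) (a : Fin mm → A) (b : Fin mm → B),
    splitMap k A B mm (PiTensorProduct.tprod k (fun i => a i ⊗ₜ[k] b i))
      = (PiTensorProduct.tprod k a) ⊗ₜ[k] (PiTensorProduct.tprod k b)
  | 0, a, b => by
    have hA : (isEmptyEquiv (Fin 0)).symm (1 : k) = PiTensorProduct.tprod k a := by
      rw [LinearEquiv.symm_apply_eq, isEmptyEquiv_apply_tprod]
    have hB : (isEmptyEquiv (Fin 0)).symm (1 : k) = PiTensorProduct.tprod k b := by
      rw [LinearEquiv.symm_apply_eq, isEmptyEquiv_apply_tprod]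
    simp [splitMap, hA, hB]
  | (mm + 1), a, b => by
    have hA : (succEquiv k A mm).symm (a 0 ⊗ₜ[k] PiTensorProduct.tprod k (fun i => a i.succ))
        = PiTensorProduct.tprod k a := by
      rw [LinearEquiv.symm_apply_eq, succEquiv_tprod]
    have hB : (succEquiv k B mm).symm (b 0 ⊗ₜ[k] PiTensorProduct.tprod k (fun i => b i.succ))
        = PiTensorProduct.tprod k b := by
      rw [LinearEquiv.symm_apply_eq, succEquiv_tprod]
    simp only [splitMap, LinearMap.coe_comp, LinearEquiv.coe_coe, Function.comp_apply,
      succEquiv_tprod, LinearMap.lTensor_tmul,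
      splitMap_tprod mm (fun i => a i.succ) (fun i => b i.succ),
      TensorProduct.tensorTensorTensorComm_tmul, TensorProduct.map_tmul, hA, hB]

/-- Combine two tensor powers into the tensor power of the binary tensor product. -/
noncomputable def combineMap (mm : ℕ) :
    (⨂[k] _ : Fin mm, A) →ₗ[k] (⨂[k] _ : Fin mm, B) →ₗ[k] ⨂[k] _ : Fin mm, (A ⊗[k] B) :=
  PiTensorProduct.map₂ (fun _ => TensorProduct.mk k A B)

theorem combineMap_tprod (mm : ℕ) (a : Fin mm → A) (b : Fin mm → B) :
    combineMap k A B mm (PiTensorProduct.tprod k a) (PiTensorProduct.tprod k b)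
      = PiTensorProduct.tprod k (fun i => a i ⊗ₜ[k] b i) :=
  PiTensorProduct.map₂_tprod_tprod _ _ _

/-- The rotation endomorphism of a tensor power, `⊗ aᵢ ↦ ⊗ a (finRotate m i)`. -/
noncomputable def rotTensor (mm : ℕ) : (⨂[k] _ : Fin mm, A) →ₗ[k] ⨂[k] _ : Fin mm, A :=
  (reindex k (fun _ : Fin mm => A) (finRotate mm).symm).toLinearMap

theorem rotTensor_tprod (mm : ℕ) (a : Fin mm → A) :
    rotTensor k A mm (PiTensorProduct.tprod k a)
      = PiTensorProduct.tprod k (fun i => a (finRotate mm i)) := by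
  simp [rotTensor, reindex_tprod, Function.comp_def]

/-- The rotation map `⨂ᵢ (A ⊗ B) → ⨂ᵢ (B ⊗ A)`, `⊗ (aᵢ ⊗ bᵢ) ↦ ⊗ (bᵢ ⊗ a (rot i))`. -/
noncomputable def sigmaMap (mm : ℕ) :
    (⨂[k] _ : Fin mm, (A ⊗[k] B)) →ₗ[k] ⨂[k] _ : Fin mm, (B ⊗[k] A) :=
  (TensorProduct.lift (combineMap k B A mm)).comp <|
    (TensorProduct.map LinearMap.id (rotTensor k A mm)).comp <|
      (TensorProduct.comm k _ _).toLinearMap.comp (splitMap k A B mm)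

theorem sigmaMap_tprod (mm : ℕ) (a : Fin mm → A) (b : Fin mm → B) :
    sigmaMap k A B mm (PiTensorProduct.tprod k (fun i => a i ⊗ₜ[k] b i))
      = PiTensorProduct.tprod k (fun i => b i ⊗ₜ[k] a (finRotate mm i)) := by
  simp [sigmaMap, splitMap_tprod, rotTensor_tprod, combineMap_tprod]

/-- A spanning-set extensionality principle: linear maps out of `⨂ᵢ (A ⊗ B)` agreeing on
tensor products of pure tensors are equal. -/
theorem ext_pure {E : Type*} [AddCommGroup E] [Module k E] (mm : ℕ)
    (L₁ L₂ : (⨂[k] _ : Fin mm, (A ⊗[k] B)) →ₗ[k] E)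
    (h : ∀ (a : Fin mm → A) (b : Fin mm → B),
      L₁ (PiTensorProduct.tprod k (fun i => a i ⊗ₜ[k] b i))
        = L₂ (PiTensorProduct.tprod k (fun i => a i ⊗ₜ[k] b i))) : L₁ = L₂ := by
  ext x
  choose S hS using fun i => TensorProduct.exists_finset (x i)
  have hx : PiTensorProduct.tprod k x
      = ∑ r ∈ Fintype.piFinset S,
          PiTensorProduct.tprod k (fun i => (r i).1 ⊗ₜ[k] (r i).2) := by
    calc PiTensorProduct.tprod k x
        = (PiTensorProduct.tprod k) (fun i => ∑ p ∈ S i, p.1 ⊗ₜ[k] p.2) := by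
          congr 1; funext i; exact hS i
      _ = _ := MultilinearMap.map_sum_finset _ _ _
  simp only [LinearMap.compMultilinearMap_apply, hx, map_sum]
  exact Finset.sum_congr rfl fun r _ => h _ _

theorem sigmaMap_comp_rot (mm : ℕ) :
    (sigmaMap k A B mm).comp
        (reindex k (fun _ : Fin mm => A ⊗[k] B) (finRotate mm)).toLinearMap
      = ((reindex k (fun _ : Fin mm => B ⊗[k] A) (finRotate mm)).toLinearMap).comp
          (sigmaMap k A B mm) := by
  apply ext_pure
  intro a b
  simp only [LinearMap.coe_comp, LinearEquiv.coe_coe, Function.comp_apply, reindex_tprod,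
    sigmaMap_tprod, Function.comp_def]
  congr 1
  funext i
  simp
  obtain ⟨n, rfl⟩ : ∃ n, mm = n + 1 := ⟨mm - 1, by have := i.pos; omega⟩
  simp

theorem sigmaMap_comp_sigmaMap (mm : ℕ) :
    (sigmaMap k B A mm).comp (sigmaMap k A B mm)
      = (reindex k (fun _ : Fin mm => A ⊗[k] B) (finRotate mm).symm).toLinearMap := by
  apply ext_pure
  intro a b
  simp only [LinearMap.coe_comp, LinearEquiv.coe_coe, Function.comp_apply, sigmaMap_tprod,
    reindex_tprod, Function.comp_def, Equiv.symm_symm]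



theorem gen_mem (mm : ℕ) (y : ⨂[k] _ : Fin mm, A) :
    y - (reindex k (fun _ : Fin mm => A) (finRotate mm)) y ∈ coinvSub k A mm :=
  Submodule.subset_span ⟨y, rfl⟩

theorem sub_rot_symm_mem (mm : ℕ) (y : ⨂[k] _ : Fin mm, A) :
    y - (reindex k (fun _ : Fin mm => A) (finRotate mm)).symm y ∈ coinvSub k A mm := by
  have h := gen_mem k A mm ((reindex k (fun _ : Fin mm => A) (finRotate mm)).symm y)
  rw [LinearEquiv.apply_symm_apply] at h
  have h2 := (coinvSub k A mm).neg_mem h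
  rwa [neg_sub] at h2

theorem sigmaMap_coinv_le (mm : ℕ) :
    coinvSub k (A ⊗[k] B) mm ≤
      Submodule.comap (sigmaMap k A B mm) (coinvSub k (B ⊗[k] A) mm) := by
  rw [coinvSub, Submodule.span_le]
  rintro x ⟨y, rfl⟩
  rw [SetLike.mem_coe, Submodule.mem_comap, map_sub]
  have h := LinearMap.congr_fun (sigmaMap_comp_rot k A B mm) y
  simp only [LinearMap.coe_comp, LinearEquiv.coe_coe, Function.comp_apply] at h
  rw [h]
  exact gen_mem k (B ⊗[k] A) mm _

end Aux

/-- the rotation maps `τ_{M,N} : T(M⊗N) → T(N⊗M)` on `C_m`-coinvariants of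
`m`-fold tensor powers satisfy `τ_{M,N} ∘ τ_{N,M} = id` on `T(N ⊗ M)`. -/
theorem rotation_coinv_involutive (M N : Type*)
    [AddCommGroup M] [Module k M] [AddCommGroup N] [Module k N] (m : ℕ) (hm : 1 ≤ m) :
    ∃ (τMN : Tcoinv k (M ⊗[k] N) m →ₗ[k] Tcoinv k (N ⊗[k] M) m)
      (τNM : Tcoinv k (N ⊗[k] M) m →ₗ[k] Tcoinv k (M ⊗[k] N) m),
      (∀ (a : Fin m → M) (b : Fin m → N),
        τMN (Submodule.Quotient.mk (⨂ₜ[k] i, (a i ⊗ₜ[k] b i)))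
          = Submodule.Quotient.mk (⨂ₜ[k] i, (b i ⊗ₜ[k] a (finRotate m i)))) ∧
      (∀ (b : Fin m → N) (a : Fin m → M),
        τNM (Submodule.Quotient.mk (⨂ₜ[k] i, (b i ⊗ₜ[k] a i)))
          = Submodule.Quotient.mk (⨂ₜ[k] i, (a i ⊗ₜ[k] b (finRotate m i)))) ∧
      τMN.comp τNM = LinearMap.id := by
  refine ⟨Submodule.mapQ _ _ (sigmaMap k M N m) (sigmaMap_coinv_le k M N m),
    Submodule.mapQ _ _ (sigmaMap k N M m) (sigmaMap_coinv_le k N M m), ?_, ?_, ?_⟩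
  · intro a b
    rw [Submodule.mapQ_apply, sigmaMap_tprod]
  · intro b a
    rw [Submodule.mapQ_apply, sigmaMap_tprod]
  · apply LinearMap.ext
    intro x
    obtain ⟨y, rfl⟩ := Submodule.Quotient.mk_surjective _ x
    rw [LinearMap.comp_apply, Submodule.mapQ_apply, Submodule.mapQ_apply, LinearMap.id_apply,
      Submodule.Quotient.eq]
    have h := LinearMap.congr_fun (sigmaMap_comp_sigmaMap k N M m) y
    simp only [LinearMap.coe_comp, LinearEquiv.coe_coe, Function.comp_apply] at h
    rw [h, ← PiTensorProduct.reindex_symm]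
    have h2 := sub_rot_symm_mem k (N ⊗[k] M) m y
    have h3 := (coinvSub k (N ⊗[k] M) m).neg_mem h2
    rwa [neg_sub] at h3
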